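/- If G is a connected bipartite graph on n vertices with bipartition V(G) = V_1 ∪ V_2 satisfying |V_1| = |V_2| = α(G) = n/2, then α(T_2(G)) = n²/4. -/

import Mathlib

/-- The `k`-token graph of `G`: vertices are the `k`-subsets of `V(G)`, two subsets
adjacent iff their symmetric difference is an edge of `G`. -/
def tokenGraph {V : Type*} [DecidableEq V] (G : SimpleGraph V) (k : ℕ) :
    SimpleGraph {s : Finset V // s.card = k} where
  Adj A B := ∃ a b, G.Adj a b ∧ symmDiff A.1 B.1 = {a, b}
  symm := by
    constructor
    rintro A B ⟨a, b, hab, h⟩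
    exact ⟨b, a, hab.symm, by rw [symmDiff_comm, h, Finset.pair_comm]⟩
  loopless := by
    constructor
    rintro A ⟨a, b, hab, h⟩
    rw [symmDiff_self] at h
    exact (Finset.insert_ne_empty a {b}) (by simpa using h.symm)

/-- A set of vertices is independent if no two of its members are adjacent. -/
def IndepSet {W : Type*} (G : SimpleGraph W) (s : Set W) : Prop :=
  s.Pairwise fun a b => ¬ G.Adj a b

/-- The independence number of a finite graph. -/
noncomputable def indepNum {W : Type*} [Fintype W] (G : SimpleGraph W) : ℕ := by
  classical exact Finset.univ.sup fun s : Finset W => if IndepSet G ↑s then s.card else 0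

/-- A graph is well-covered if all its maximal independent sets have the same cardinality. -/
def WellCovered {W : Type*} (G : SimpleGraph W) : Prop :=
  ∀ s t : Set W, Maximal (IndepSet G) s → Maximal (IndepSet G) t → s.ncard = t.ncard

lemma symmDiff_pair {V : Type*} [DecidableEq V] (a b c : V) (hba : b ≠ a) (hca : c ≠ a)
    (hbc : b ≠ c) : symmDiff ({a,b} : Finset V) {a,c} = {b,c} := by
  ext w
  simp only [Finset.mem_symmDiff, Finset.mem_insert, Finset.mem_singleton]
  constructor
  · rintro (⟨h1, h2⟩ | ⟨h1, h2⟩) <;> tauto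
  · rintro (rfl | rfl)
    · exact Or.inl ⟨Or.inr rfl, by tauto⟩
    · exact Or.inr ⟨Or.inr rfl, by tauto⟩

section helpers
variable {W : Type*} [Fintype W] (H : SimpleGraph W)

lemma card_le_indepNum {s : Finset W} (h : IndepSet H ↑s) : s.card ≤ indepNum H := by
  classical
  unfold indepNum
  calc s.card = (if IndepSet H ↑s then s.card else 0) := by rw [if_pos h]
    _ ≤ _ := Finset.le_sup (f := fun u : Finset W => if IndepSet H ↑u then u.card else 0) (Finset.mem_univ s)

lemma indepNum_le {N : ℕ} (h : ∀ s : Finset W, IndepSet H ↑s → s.card ≤ N) :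
    indepNum H ≤ N := by
  classical
  unfold indepNum
  apply Finset.sup_le
  intro s _
  split
  · exact h s ‹_›
  · exact Nat.zero_le N
end helpers

lemma two_mul_choose_two (n : ℕ) : 2 * n.choose 2 = n * (n - 1) := by
  rw [Nat.choose_two_right, Nat.two_mul_div_two_of_even]
  rcases n with _ | m
  · simp
  · simpa [Nat.succ_sub_one, mul_comm] using Nat.even_mul_succ_self m

lemma choose_sum (n : ℕ) : n.choose 1 * 1 + n.choose 2 * 2 = n * n := by
  rcases n with _ | m
  · simp
  · have h2 : 2 * (m + 1).choose 2 = (m + 1) * m := by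
      simpa using two_mul_choose_two (m + 1)
    have h4 : (m + 1) * (m + 1) = (m + 1) * m + (m + 1) := by ring
    rw [Nat.choose_one_right]
    omega
set_option maxHeartbeats 1000000 in
theorem stmt5 {V : Type*} [Fintype V] [DecidableEq V] (G : SimpleGraph V)
    (V₁ V₂ : Set V) (hG : G.Connected)
    (hunion : V₁ ∪ V₂ = Set.univ) (hdisj : V₁ ∩ V₂ = ∅)
    (hbip : ∀ a b, G.Adj a b → (a ∈ V₁ ∧ b ∈ V₂) ∨ (a ∈ V₂ ∧ b ∈ V₁))
    (hc1 : V₁.ncard = indepNum G) (hc2 : V₂.ncard = indepNum G)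
    (hn : 2 * indepNum G = Fintype.card V) :
    4 * indepNum (tokenGraph G 2) = (Fintype.card V) ^ 2 := by
  classical
  set T := tokenGraph G 2 with hT
  set α := indepNum G with hα
  set F₁ := V₁.toFinset with hF₁
  set F₂ := V₂.toFinset with hF₂
  have hF₁card : F₁.card = α := by rw [← hc1, Set.ncard_eq_toFinset_card']
  have hF₂card : F₂.card = α := by rw [← hc2, Set.ncard_eq_toFinset_card']
  have hmem₁ : ∀ v, v ∈ F₁ ↔ v ∈ V₁ := fun v => Set.mem_toFinset
  have hmem₂ : ∀ v, v ∈ F₂ ↔ v ∈ V₂ := fun v => Set.mem_toFinset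
  have hdisj' : ∀ v, v ∈ F₁ → v ∈ F₂ → False := by
    intro v h1 h2
    exact Set.eq_empty_iff_forall_notMem.mp hdisj v ⟨(hmem₁ v).mp h1, (hmem₂ v).mp h2⟩
  have huniv : ∀ v, v ∈ F₁ ∨ v ∈ F₂ := by
    intro v
    have : v ∈ V₁ ∪ V₂ := hunion ▸ Set.mem_univ v
    rcases this with h | h
    · exact Or.inl ((hmem₁ v).mpr h)
    · exact Or.inr ((hmem₂ v).mpr h)
  have hne12 : ∀ a, a ∈ F₁ → ∀ b, b ∈ F₂ → a ≠ b := by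
    rintro a ha b hb rfl; exact hdisj' a ha hb
  have hnoE₁ : ∀ a b, a ∈ F₁ → b ∈ F₁ → ¬ G.Adj a b := by
    intro a b ha hb hab
    rcases hbip a b hab with ⟨_, h2⟩ | ⟨h1, _⟩
    · exact hdisj' b hb ((hmem₂ b).mpr h2)
    · exact hdisj' a ha ((hmem₂ a).mpr h1)
  have hnoE₂ : ∀ a b, a ∈ F₂ → b ∈ F₂ → ¬ G.Adj a b := by
    intro a b ha hb hab
    rcases hbip a b hab with ⟨h1, _⟩ | ⟨_, h2⟩
    · exact hdisj' a ((hmem₁ a).mpr h1) ha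
    · exact hdisj' b ((hmem₁ b).mpr h2) hb
  -- Hall's condition and a perfect matching
  have hall : ∀ s : Finset {a // a ∈ F₁},
      s.card ≤ (s.biUnion fun a => G.neighborFinset ↑a).card := by
    intro s
    by_contra hlt
    push_neg at hlt
    set A := s.image (Subtype.val) with hA
    set N := s.biUnion (fun a => G.neighborFinset ↑a) with hN
    have hAcard : A.card = s.card := Finset.card_image_of_injective _ Subtype.val_injective
    have hAF₁ : A ⊆ F₁ := by
      intro x hx
      obtain ⟨a, _, rfl⟩ := Finset.mem_image.mp hx
      exact a.2
    have hNF₂ : N ⊆ F₂ := by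
      intro w hw
      obtain ⟨a, _, hw⟩ := Finset.mem_biUnion.mp hw
      have hadj := (G.mem_neighborFinset _ _).mp hw
      rcases hbip _ _ hadj with ⟨_, h2⟩ | ⟨h1, _⟩
      · exact (hmem₂ w).mpr h2
      · exact absurd ((hmem₂ _).mpr h1) (fun h => hdisj' _ a.2 h)
    have hIindep : IndepSet G ↑(A ∪ (F₂ \ N)) := by
      intro x hx y hy hxy hadj
      rw [Finset.mem_coe, Finset.mem_union] at hx hy
      have key : ∀ z w, z ∈ A → w ∈ F₂ \ N → ¬ G.Adj z w := by
        intro z w hz hw hzw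
        obtain ⟨a, has, rfl⟩ := Finset.mem_image.mp hz
        have : w ∈ N := Finset.mem_biUnion.mpr ⟨a, has, (G.mem_neighborFinset _ _).mpr hzw⟩
        exact (Finset.mem_sdiff.mp hw).2 this
      rcases hx with hx | hx <;> rcases hy with hy | hy
      · exact hnoE₁ x y (hAF₁ hx) (hAF₁ hy) hadj
      · exact key x y hx hy hadj
      · exact key y x hy hx hadj.symm
      · exact hnoE₂ x y (Finset.mem_sdiff.mp hx).1 (Finset.mem_sdiff.mp hy).1 hadj
    have hle := card_le_indepNum G hIindep
    have hdisjI : Disjoint A (F₂ \ N) := by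
      rw [Finset.disjoint_left]
      intro x hx hx2
      exact hdisj' x (hAF₁ hx) (Finset.mem_sdiff.mp hx2).1
    rw [Finset.card_union_of_disjoint hdisjI, Finset.card_sdiff_of_subset hNF₂] at hle
    have hNle : N.card ≤ F₂.card := Finset.card_le_card hNF₂
    omega
  obtain ⟨f, hfinj, hf⟩ := (Finset.all_card_le_biUnion_card_iff_exists_injective _).mp hall
  have hfadj : ∀ a : {a // a ∈ F₁}, G.Adj ↑a (f a) := fun a => (G.mem_neighborFinset _ _).mp (hf a)
  have hfF₂ : ∀ a : {a // a ∈ F₁}, f a ∈ F₂ := by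
    intro a
    rcases hbip _ _ (hfadj a) with ⟨_, h2⟩ | ⟨h1, _⟩
    · exact (hmem₂ _).mpr h2
    · exact absurd a.2 (fun h => hdisj' _ h ((hmem₂ _).mpr h1))
  set f' : {a // a ∈ F₁} → {b // b ∈ F₂} := fun a => ⟨f a, hfF₂ a⟩ with hf'
  have hf'inj : Function.Injective f' := fun a b h => hfinj (congrArg Subtype.val h)
  have hbij : Function.Bijective f' := (Fintype.bijective_iff_injective_and_card f').mpr
    ⟨hf'inj, by simp [Fintype.card_coe, hF₁card, hF₂card]⟩
  set e := Equiv.ofBijective f' hbij with he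
  set M : V → V := fun x => if h : x ∈ F₁ then ↑(e ⟨x, h⟩) else x with hM
  set p : V → V := fun w => if h : w ∈ F₂ then ↑(e.symm ⟨w, h⟩) else w with hp
  have hMadj : ∀ x, x ∈ F₁ → G.Adj x (M x) := by
    intro x h
    simp only [hM, dif_pos h]
    exact hfadj ⟨x, h⟩
  have hMF₂ : ∀ x, x ∈ F₁ → M x ∈ F₂ := by
    intro x h
    simp only [hM, dif_pos h]
    exact (e ⟨x, h⟩).2
  have hMnex : ∀ x, x ∈ F₁ → M x ≠ x := fun x h hE => hdisj' x h (hE ▸ hMF₂ x h)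
  have hMinj : ∀ x y, x ∈ F₁ → y ∈ F₁ → M x = M y → x = y := by
    intro x y hx hy hxy
    simp only [hM, dif_pos hx, dif_pos hy] at hxy
    exact congrArg Subtype.val (e.injective (Subtype.ext hxy))
  have hpF₁ : ∀ w, p w ∈ F₁ := by
    intro w
    by_cases h : w ∈ F₂
    · simp only [hp, dif_pos h]
      exact (e.symm ⟨w, h⟩).2
    · simp only [hp, dif_neg h]
      rcases huniv w with h1 | h2
      · exact h1
      · exact absurd h2 h
  have hpre : ∀ w x, x ∈ F₁ → p w = x → w = x ∨ w = M x := by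
    intro w x hx hpw
    by_cases h : w ∈ F₂
    · right
      simp only [hp, dif_pos h] at hpw
      have h1 : e.symm ⟨w, h⟩ = ⟨x, hx⟩ := Subtype.ext hpw
      have h2 : (⟨w, h⟩ : {b // b ∈ F₂}) = e ⟨x, hx⟩ := by
        rw [← h1, Equiv.apply_symm_apply]
      have h3 : w = ↑(e ⟨x, hx⟩) := congrArg Subtype.val h2
      rw [h3]
      simp only [hM, dif_pos hx]
    · left
      simpa only [hp, dif_neg h] using hpw
  -- p maps matched vertices back
  have hpM : ∀ x, x ∈ F₁ → p (M x) = x := by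
    intro x h
    have h2 := hMF₂ x h
    simp only [hp, dif_pos h2]
    have h3 : (⟨M x, h2⟩ : {b // b ∈ F₂}) = e ⟨x, h⟩ := Subtype.ext (by simp only [hM, dif_pos h])
    rw [h3, Equiv.symm_apply_apply]
  clear_value f' e M p
  have hnotboth : ∀ (t : Finset {s : Finset V // s.card = 2}), IndepSet T ↑t →
      ∀ B C, B ∈ t → C ∈ t → T.Adj B C → False := by
    intro t ht B C hB hC hadj
    exact ht (Finset.mem_coe.mpr hB) (Finset.mem_coe.mpr hC)
      (fun h => T.loopless.irrefl B (h ▸ hadj)) hadj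
  have hub : indepNum T ≤ α * α := by
    apply indepNum_le
    intro t ht
    set key : {s : Finset V // s.card = 2} → Finset V := fun A => A.1.image p with hkey
    have hkeysub : ∀ A : {s : Finset V // s.card = 2}, key A ⊆ F₁ := by
      intro A w hw
      obtain ⟨u, _, rfl⟩ := Finset.mem_image.mp hw
      exact hpF₁ u
    have hkeycard : ∀ A : {s : Finset V // s.card = 2}, 1 ≤ (key A).card ∧ (key A).card ≤ 2 := by
      intro A
      constructor
      · have : A.1.Nonempty := Finset.card_pos.mp (by rw [A.2]; norm_num)
        exact Finset.card_pos.mpr (this.image p)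
      · calc (key A).card ≤ A.1.card := Finset.card_image_le
          _ = 2 := A.2
    have hfib : ∀ k ∈ t.image key, (t.filter fun A => key A = k).card ≤ k.card := by
      intro k hk
      have hkF₁ : k ⊆ F₁ := by
        obtain ⟨A, _, rfl⟩ := Finset.mem_image.mp hk
        exact hkeysub A
      have hkc : k.card = 1 ∨ k.card = 2 := by
        obtain ⟨A, _, rfl⟩ := Finset.mem_image.mp hk
        have := hkeycard A
        omega
      -- membership characterization of fibers
      have hfibmem : ∀ A, A ∈ t.filter (fun A => key A = k) →
          ∀ u v : V, u ≠ v → A.1 = {u, v} → ({p u, p v} : Finset V) = k := by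
        intro A hA u v huv hA1
        have h2 := (Finset.mem_filter.mp hA).2
        rw [hkey] at h2
        simp only at h2
        rw [hA1, Finset.image_insert, Finset.image_singleton] at h2
        exact h2
      rcases hkc with h1 | h2
      · -- singleton key
        obtain ⟨x, hxk⟩ := Finset.card_eq_one.mp h1
        have hx : x ∈ F₁ := hkF₁ (by rw [hxk]; exact Finset.mem_singleton_self x)
        have hxMx : x ≠ M x := Ne.symm (hMnex x hx)
        have hsub : t.filter (fun A => key A = k) ⊆ {⟨({x, M x} : Finset V), Finset.card_pair hxMx⟩} := by
          intro A hA
          obtain ⟨u, v, huv, hA1⟩ := Finset.card_eq_two.mp A.2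
          have hpair := hfibmem A hA u v huv hA1
          rw [hxk] at hpair
          have hpu : p u = x := by
            have : p u ∈ ({x} : Finset V) := by
              rw [← hpair]; exact Finset.mem_insert_self _ _
            simpa using this
          have hpv : p v = x := by
            have : p v ∈ ({x} : Finset V) := by
              rw [← hpair]; exact Finset.mem_insert.mpr (Or.inr (Finset.mem_singleton_self _))
            simpa using this
          rw [Finset.mem_singleton]
          apply Subtype.ext
          rw [hA1]
          rcases hpre u x hx hpu with h | h <;> rcases hpre v x hx hpv with h' | h'
          · exact absurd (h.trans h'.symm) huv
          · rw [h, h']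
          · rw [h, h']; exact Finset.pair_comm _ _
          · exact absurd (h.trans h'.symm) huv
        rw [h1]
        exact le_trans (Finset.card_le_card hsub) (by simp)
      · -- doubleton key
        obtain ⟨x, y, hxy, hk2⟩ := Finset.card_eq_two.mp h2
        have hx : x ∈ F₁ := hkF₁ (by rw [hk2]; exact Finset.mem_insert_self _ _)
        have hy : y ∈ F₁ := hkF₁ (by rw [hk2]; exact Finset.mem_insert.mpr (Or.inr (Finset.mem_singleton_self _)))
        have hxMy : x ≠ M y := fun h => hdisj' x hx (h ▸ hMF₂ y hy)
        have hMxy : M x ≠ y := fun h => hdisj' y hy (h ▸ hMF₂ x hx)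
        have hyMy : y ≠ M y := Ne.symm (hMnex y hy)
        have hxMx : x ≠ M x := Ne.symm (hMnex x hx)
        have hMxMy : M x ≠ M y := fun h => hxy (hMinj x y hx hy h)
        set A₁ : {s : Finset V // s.card = 2} := ⟨({x, y} : Finset V), Finset.card_pair hxy⟩ with hA₁
        set A₂ : {s : Finset V // s.card = 2} := ⟨({x, M y} : Finset V), Finset.card_pair hxMy⟩ with hA₂
        set A₃ : {s : Finset V // s.card = 2} := ⟨({M x, y} : Finset V), Finset.card_pair hMxy⟩ with hA₃
        set A₄ : {s : Finset V // s.card = 2} := ⟨({M x, M y} : Finset V), Finset.card_pair hMxMy⟩ with hA₄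
        have hadj12 : T.Adj A₁ A₂ :=
          ⟨y, M y, hMadj y hy, symmDiff_pair x y (M y) (Ne.symm hxy) (Ne.symm hxMy) hyMy⟩
        have hadj13 : T.Adj A₁ A₃ := by
          refine ⟨x, M x, hMadj x hx, ?_⟩
          show symmDiff ({x, y} : Finset V) {M x, y} = {x, M x}
          rw [Finset.pair_comm x y, Finset.pair_comm (M x) y]
          exact symmDiff_pair y x (M x) hxy hMxy hxMx
        have hadj24 : T.Adj A₂ A₄ := by
          refine ⟨x, M x, hMadj x hx, ?_⟩
          show symmDiff ({x, M y} : Finset V) {M x, M y} = {x, M x}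
          rw [Finset.pair_comm x (M y), Finset.pair_comm (M x) (M y)]
          exact symmDiff_pair (M y) x (M x) hxMy hMxMy hxMx
        have hadj34 : T.Adj A₃ A₄ := by
          refine ⟨y, M y, hMadj y hy, ?_⟩
          show symmDiff ({M x, y} : Finset V) {M x, M y} = {y, M y}
          exact symmDiff_pair (M x) y (M y) hMxy.symm hMxMy.symm hyMy
        have hsub : t.filter (fun A => key A = k) ⊆ {A₁, A₂, A₃, A₄} := by
          intro A hA
          obtain ⟨u, v, huv, hA1⟩ := Finset.card_eq_two.mp A.2
          have hpair := hfibmem A hA u v huv hA1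
          rw [hk2] at hpair
          have hpu : p u = x ∨ p u = y := by
            have : p u ∈ ({x, y} : Finset V) := by
              rw [← hpair]; exact Finset.mem_insert_self _ _
            simpa using this
          have hpv : p v = x ∨ p v = y := by
            have : p v ∈ ({x, y} : Finset V) := by
              rw [← hpair]; exact Finset.mem_insert.mpr (Or.inr (Finset.mem_singleton_self _))
            simpa using this
          have hxin : x = p u ∨ x = p v := by
            have : x ∈ ({p u, p v} : Finset V) := by
              rw [hpair]; exact Finset.mem_insert_self _ _
            simpa using this
          have hyin : y = p u ∨ y = p v := by
            have : y ∈ ({p u, p v} : Finset V) := by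
              rw [hpair]; exact Finset.mem_insert.mpr (Or.inr (Finset.mem_singleton_self _))
            simpa using this
          have hcases : (p u = x ∧ p v = y) ∨ (p u = y ∧ p v = x) := by
            rcases hpu with h | h
            · rcases hyin with h' | h'
              · exact (hxy (h'.trans h).symm).elim
              · exact Or.inl ⟨h, h'.symm⟩
            · rcases hxin with h' | h'
              · exact (hxy (h'.trans h)).elim
              · exact Or.inr ⟨h, h'.symm⟩
          simp only [Finset.mem_insert, Finset.mem_singleton]
          rcases hcases with ⟨h1, h2⟩ | ⟨h1, h2⟩
          · rcases hpre u x hx h1 with h | h <;> rcases hpre v y hy h2 with h' | h'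
            · exact Or.inl (Subtype.ext (by rw [hA1, h, h']))
            · exact Or.inr (Or.inl (Subtype.ext (by rw [hA1, h, h'])))
            · exact Or.inr (Or.inr (Or.inl (Subtype.ext (by rw [hA1, h, h']))))
            · exact Or.inr (Or.inr (Or.inr (Subtype.ext (by rw [hA1, h, h']))))
          · rcases hpre u y hy h1 with h | h <;> rcases hpre v x hx h2 with h' | h'
            · exact Or.inl (Subtype.ext (by rw [hA1, h, h']; exact Finset.pair_comm _ _))
            · exact Or.inr (Or.inr (Or.inl (Subtype.ext (by rw [hA1, h, h']; exact Finset.pair_comm _ _))))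
            · exact Or.inr (Or.inl (Subtype.ext (by rw [hA1, h, h']; exact Finset.pair_comm _ _)))
            · exact Or.inr (Or.inr (Or.inr (Subtype.ext (by rw [hA1, h, h']; exact Finset.pair_comm _ _))))
        have hmemt : ∀ B, B ∈ t.filter (fun A => key A = k) → B ∈ t :=
          fun B hB => (Finset.mem_filter.mp hB).1
        have hfin : (t.filter fun A => key A = k).card ≤ 2 := by
          by_cases h1 : A₁ ∈ t.filter (fun A => key A = k)
          · have hsub' : t.filter (fun A => key A = k) ⊆ {A₁, A₄} := by
              intro B hB
              rcases Finset.mem_insert.mp (hsub hB) with h | h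
              · simp [h]
              rcases Finset.mem_insert.mp h with h | h
              · exact absurd hadj12 (fun ha => hnotboth t ht A₁ B (hmemt _ h1) (hmemt _ hB) (h ▸ ha))
              rcases Finset.mem_insert.mp h with h | h
              · exact absurd hadj13 (fun ha => hnotboth t ht A₁ B (hmemt _ h1) (hmemt _ hB) (h ▸ ha))
              · simp [Finset.mem_singleton.mp h]
            calc (t.filter fun A => key A = k).card ≤ ({A₁, A₄} : Finset _).card :=
                Finset.card_le_card hsub'
              _ ≤ 2 := Finset.card_insert_le _ _ |>.trans (by simp)
          · by_cases h4 : A₄ ∈ t.filter (fun A => key A = k)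
            · have hsub' : t.filter (fun A => key A = k) ⊆ {A₄} := by
                intro B hB
                rcases Finset.mem_insert.mp (hsub hB) with h | h
                · exact absurd (h ▸ hB) h1
                rcases Finset.mem_insert.mp h with h | h
                · exact absurd hadj24 (fun ha => hnotboth t ht B A₄ (hmemt _ hB) (hmemt _ h4) (h ▸ ha))
                rcases Finset.mem_insert.mp h with h | h
                · exact absurd hadj34 (fun ha => hnotboth t ht B A₄ (hmemt _ hB) (hmemt _ h4) (h ▸ ha))
                · simp [Finset.mem_singleton.mp h]
              calc (t.filter fun A => key A = k).card ≤ ({A₄} : Finset _).card :=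
                  Finset.card_le_card hsub'
                _ ≤ 2 := by simp
            · have hsub' : t.filter (fun A => key A = k) ⊆ {A₂, A₃} := by
                intro B hB
                rcases Finset.mem_insert.mp (hsub hB) with h | h
                · exact absurd (h ▸ hB) h1
                rcases Finset.mem_insert.mp h with h | h
                · simp [h]
                rcases Finset.mem_insert.mp h with h | h
                · simp [h]
                · exact absurd (Finset.mem_singleton.mp h ▸ hB) h4
              calc (t.filter fun A => key A = k).card ≤ ({A₂, A₃} : Finset _).card :=
                  Finset.card_le_card hsub'
                _ ≤ 2 := Finset.card_insert_le _ _ |>.trans (by simp)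
        omega
    have hpow : t.image key ⊆ F₁.powersetCard 1 ∪ F₁.powersetCard 2 := by
      intro k hk
      obtain ⟨A, _, rfl⟩ := Finset.mem_image.mp hk
      have h1 := hkeycard A
      rcases (by omega : (key A).card = 1 ∨ (key A).card = 2) with h | h
      · exact Finset.mem_union_left _ (Finset.mem_powersetCard.mpr ⟨hkeysub A, h⟩)
      · exact Finset.mem_union_right _ (Finset.mem_powersetCard.mpr ⟨hkeysub A, h⟩)
    have hdisjP : Disjoint (F₁.powersetCard 1) (F₁.powersetCard 2) := by
      rw [Finset.disjoint_left]
      intro k h1 h2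
      have := (Finset.mem_powersetCard.mp h1).2
      have := (Finset.mem_powersetCard.mp h2).2
      omega
    calc t.card = ∑ k ∈ t.image key, (t.filter fun A => key A = k).card :=
        Finset.card_eq_sum_card_fiberwise (fun A hA => Finset.mem_image_of_mem key hA)
      _ ≤ ∑ k ∈ t.image key, k.card := Finset.sum_le_sum hfib
      _ ≤ ∑ k ∈ (F₁.powersetCard 1 ∪ F₁.powersetCard 2), k.card :=
        Finset.sum_le_sum_of_subset hpow
      _ = (∑ k ∈ F₁.powersetCard 1, k.card) + ∑ k ∈ F₁.powersetCard 2, k.card :=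
        Finset.sum_union hdisjP
      _ = (∑ _k ∈ F₁.powersetCard 1, 1) + ∑ _k ∈ F₁.powersetCard 2, 2 := by
        rw [Finset.sum_congr rfl (fun k hk => (Finset.mem_powersetCard.mp hk).2),
          Finset.sum_congr rfl (fun k hk => (Finset.mem_powersetCard.mp hk).2)]
      _ = α.choose 1 * 1 + α.choose 2 * 2 := by
        rw [Finset.sum_const, Finset.sum_const, Finset.card_powersetCard,
          Finset.card_powersetCard, hF₁card, smul_eq_mul, smul_eq_mul]
      _ = α * α := choose_sum α
  have hlb : α * α ≤ indepNum T := by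
    rcases Nat.eq_zero_or_pos α with h0 | hpos
    · simp [h0]
    · obtain ⟨a₀, ha₀⟩ := Finset.card_pos.mp (by rw [hF₁card]; exact hpos)
      obtain ⟨b₀, hb₀⟩ := Finset.card_pos.mp (by rw [hF₂card]; exact hpos)
      have hab₀ : a₀ ≠ b₀ := hne12 a₀ ha₀ b₀ hb₀
      set g : V × V → {s : Finset V // s.card = 2} := fun q =>
        if h : q.1 ≠ q.2 then ⟨({q.1, q.2} : Finset V), Finset.card_pair h⟩
        else ⟨({a₀, b₀} : Finset V), Finset.card_pair hab₀⟩ with hg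
      have hgval : ∀ a b : V, a ≠ b → (g (a, b)).1 = {a, b} := by
        intro a b hab
        rw [hg]
        simp only [dif_pos hab]
      set S := (F₁ ×ˢ F₂).image g with hS
      have hScard : S.card = α * α := by
        rw [hS, Finset.card_image_of_injOn, Finset.card_product, hF₁card, hF₂card]
        intro q hq q' hq' hgq
        rw [Finset.mem_coe, Finset.mem_product] at hq hq'
        have h1 : q.1 ≠ q.2 := hne12 _ hq.1 _ hq.2
        have h2 : q'.1 ≠ q'.2 := hne12 _ hq'.1 _ hq'.2
        have hv : ({q.1, q.2} : Finset V) = {q'.1, q'.2} := by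
          rw [← hgval q.1 q.2 h1, ← hgval q'.1 q'.2 h2]
          exact congrArg Subtype.val (by rw [hgq])
        have hq1 : q.1 = q'.1 := by
          have : q.1 ∈ ({q'.1, q'.2} : Finset V) := by
            rw [← hv]; exact Finset.mem_insert_self _ _
          rcases Finset.mem_insert.mp this with h | h
          · exact h
          · exact absurd (Finset.mem_singleton.mp h)
              (hne12 _ hq.1 _ hq'.2)
        have hq2 : q.2 = q'.2 := by
          have : q.2 ∈ ({q'.1, q'.2} : Finset V) := by
            rw [← hv]; exact Finset.mem_insert.mpr (Or.inr (Finset.mem_singleton_self _))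
          rcases Finset.mem_insert.mp this with h | h
          · exact absurd h.symm (hne12 _ hq'.1 _ hq.2)
          · exact Finset.mem_singleton.mp h
        exact Prod.ext hq1 hq2
      have hSindep : IndepSet T ↑S := by
        intro A hA B hB hAB hadj
        rw [Finset.mem_coe, hS, Finset.mem_image] at hA hB
        obtain ⟨⟨a, b⟩, hqA, rfl⟩ := hA
        obtain ⟨⟨a', b'⟩, hqB, rfl⟩ := hB
        rw [Finset.mem_product] at hqA hqB
        obtain ⟨ha, hb⟩ := hqA
        obtain ⟨ha', hb'⟩ := hqB
        have h1 : a ≠ b := hne12 _ ha _ hb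
        have h2 : a' ≠ b' := hne12 _ ha' _ hb'
        obtain ⟨u, v, huv, hsd⟩ := hadj
        rw [hgval a b h1, hgval a' b' h2] at hsd
        by_cases haa : a = a'
        · by_cases hbb : b = b'
          · exact hAB (by rw [haa, hbb])
          · subst haa
            rw [symmDiff_pair a b b' (hne12 _ ha _ hb).symm (hne12 _ ha _ hb').symm hbb] at hsd
            have hu : u ∈ ({b, b'} : Finset V) := by rw [hsd]; exact Finset.mem_insert_self _ _
            have hv : v ∈ ({b, b'} : Finset V) := by
              rw [hsd]; exact Finset.mem_insert.mpr (Or.inr (Finset.mem_singleton_self _))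
            have huF : u ∈ F₂ := by
              rcases Finset.mem_insert.mp hu with h | h
              · exact h ▸ hb
              · exact (Finset.mem_singleton.mp h) ▸ hb'
            have hvF : v ∈ F₂ := by
              rcases Finset.mem_insert.mp hv with h | h
              · exact h ▸ hb
              · exact (Finset.mem_singleton.mp h) ▸ hb'
            exact hnoE₂ u v huF hvF huv
        · by_cases hbb : b = b'
          · subst hbb
            rw [Finset.pair_comm a b, Finset.pair_comm a' b,
              symmDiff_pair b a a' (hne12 _ ha _ hb) (hne12 _ ha' _ hb) haa] at hsd
            have hu : u ∈ ({a, a'} : Finset V) := by rw [hsd]; exact Finset.mem_insert_self _ _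
            have hv : v ∈ ({a, a'} : Finset V) := by
              rw [hsd]; exact Finset.mem_insert.mpr (Or.inr (Finset.mem_singleton_self _))
            have huF : u ∈ F₁ := by
              rcases Finset.mem_insert.mp hu with h | h
              · exact h ▸ ha
              · exact (Finset.mem_singleton.mp h) ▸ ha'
            have hvF : v ∈ F₁ := by
              rcases Finset.mem_insert.mp hv with h | h
              · exact h ▸ ha
              · exact (Finset.mem_singleton.mp h) ▸ ha'
            exact hnoE₁ u v huF hvF huv
          · have hdisjp : Disjoint ({a, b} : Finset V) {a', b'} := by
              rw [Finset.disjoint_left]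
              intro w hw hw'
              rcases Finset.mem_insert.mp hw with h | h <;>
                rcases Finset.mem_insert.mp hw' with h' | h'
              · exact haa (h.symm.trans h')
              · exact hne12 _ ha _ hb' (h.symm.trans (Finset.mem_singleton.mp h'))
              · exact hne12 _ ha' _ hb (h'.symm.trans (Finset.mem_singleton.mp h))
              · exact hbb ((Finset.mem_singleton.mp h).symm.trans (Finset.mem_singleton.mp h'))
            rw [hdisjp.symmDiff_eq_sup] at hsd
            have hc4 : (({a, b} : Finset V) ⊔ {a', b'}).card = 4 := by
              rw [Finset.sup_eq_union, Finset.card_union_of_disjoint hdisjp,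
                Finset.card_pair h1, Finset.card_pair h2]
            rw [hsd] at hc4
            have : ({u, v} : Finset V).card ≤ 2 := by
              apply le_trans (Finset.card_insert_le _ _)
              simp
            omega
      have := card_le_indepNum T hSindep
      rwa [hScard] at this
  have hfin : indepNum T = α * α := le_antisymm hub hlb
  rw [hfin, ← hn]
  ring
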